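/- arXiv:2107.14075 — 4 statements merged into one kernel-verified Lean document; each statement's English description precedes it below -/
import Mathlib

section
/- Let 𝓕 be a nonempty ω-closed family of subsets of ℕ with ∅ ∉ 𝓕. Then the semigroup S(𝓕) is simple — i.e. its only two-sided ideal is S(𝓕) itself (a two-sided ideal being a nonempty subset J with S(𝓕)·J ⊆ J and J·S(𝓕) ⊆ J) — if and only if for all F₁, F₂ ∈ 𝓕 there exist k₁, k₂ ∈ ℕ such that F₁ ⊆ −k₁ + F₂ and F₂ ⊆ −k₂ + F₁. -/
/-- `zshift n F = {n + k : k ∈ F}`. -/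
def zshift (n : ℤ) (F : Set ℤ) : Set ℤ := {m : ℤ | ∃ k ∈ F, m = n + k}

/-- A family of subsets of `ℕ` (viewed as subsets of `ℤ`) is `ω`-closed if it consists of
sets of nonnegative integers and `F₁ ∩ (-n + F₂)` belongs to the family for all `n : ℕ`
and all members `F₁, F₂` of the family. -/
def OmegaClosed (𝓕 : Set (Set ℤ)) : Prop :=
  (∀ F ∈ 𝓕, ∀ x ∈ F, 0 ≤ x) ∧
    ∀ n : ℕ, ∀ F₁ ∈ 𝓕, ∀ F₂ ∈ 𝓕, F₁ ∩ zshift (-(n : ℤ)) F₂ ∈ 𝓕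

/-- The binary operation on triples `(i, j, F)`:
`(i₁,j₁,F₁)·(i₂,j₂,F₂) = (i₁−j₁+i₂, j₂, (j₁−i₂+F₁) ∩ F₂)` if `j₁ < i₂`;
`(i₁, j₂, F₁ ∩ F₂)` if `j₁ = i₂`; `(i₁, j₁−i₂+j₂, F₁ ∩ (i₂−j₁+F₂))` if `j₁ > i₂`. -/
def smul3 (x y : ℤ × ℤ × Set ℤ) : ℤ × ℤ × Set ℤ :=
  if x.2.1 < y.1 then
    (x.1 - x.2.1 + y.1, y.2.1, zshift (x.2.1 - y.1) x.2.2 ∩ y.2.2)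
  else if x.2.1 = y.1 then
    (x.1, y.2.1, x.2.2 ∩ y.2.2)
  else
    (x.1, x.2.1 - y.1 + y.2.1, x.2.2 ∩ zshift (y.1 - x.2.1) y.2.2)

/-- The carrier of the semigroup `S(𝓕)`: all triples whose third component lies in `𝓕`. -/
def Scar (𝓕 : Set (Set ℤ)) : Set (ℤ × ℤ × Set ℤ) := {x | x.2.2 ∈ 𝓕}

lemma zshift_zero (F : Set ℤ) : zshift 0 F = F := by
  ext m
  constructor
  · rintro ⟨k, hk, rfl⟩; simpa using hk
  · intro hm; exact ⟨m, hm, by ring⟩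

lemma zshift_zshift (a b : ℤ) (F : Set ℤ) : zshift a (zshift b F) = zshift (a + b) F := by
  ext m
  constructor
  · rintro ⟨k, ⟨l, hl, rfl⟩, rfl⟩; exact ⟨l, hl, by ring⟩
  · rintro ⟨k, hk, rfl⟩; exact ⟨b + k, ⟨k, hk, rfl⟩, by ring⟩

lemma zshift_mono {F G : Set ℤ} (a : ℤ) (h : F ⊆ G) : zshift a F ⊆ zshift a G := by
  rintro m ⟨k, hk, rfl⟩; exact ⟨k, h hk, rfl⟩

/-- The third component of any product is `A ∩ zshift (-m) B` with `A, B` the two factors'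
third components (in one of the two orders) and `m : ℕ`. -/
lemma smul3_third (x y : ℤ × ℤ × Set ℤ) :
    ∃ m : ℕ, (smul3 x y).2.2 = x.2.2 ∩ zshift (-(m : ℤ)) y.2.2 ∨
             (smul3 x y).2.2 = y.2.2 ∩ zshift (-(m : ℤ)) x.2.2 := by
  unfold smul3
  split_ifs with h1 h2
  · refine ⟨(y.1 - x.2.1).toNat, Or.inr ?_⟩
    have he : x.2.1 - y.1 = -(((y.1 - x.2.1).toNat : ℤ)) := by omega
    simp only [he, Set.inter_comm]
  · refine ⟨0, Or.inl ?_⟩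
    simp [zshift_zero]
  · refine ⟨(x.2.1 - y.1).toNat, Or.inl ?_⟩
    have he : y.1 - x.2.1 = -(((x.2.1 - y.1).toNat : ℤ)) := by omega
    simp only [he]

/-- simplicity criterion for `S(𝓕)` when `∅ ∉ 𝓕`. -/
theorem stmt10 (𝓕 : Set (Set ℤ)) (h : OmegaClosed 𝓕) (hne : 𝓕.Nonempty)
    (hempty : (∅ : Set ℤ) ∉ 𝓕) :
    (∀ J : Set (ℤ × ℤ × Set ℤ), J.Nonempty → J ⊆ Scar 𝓕 →
      (∀ x ∈ J, ∀ s ∈ Scar 𝓕, smul3 s x ∈ J ∧ smul3 x s ∈ J) → J = Scar 𝓕) ↔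
    (∀ F₁ ∈ 𝓕, ∀ F₂ ∈ 𝓕,
      ∃ k₁ k₂ : ℕ, F₁ ⊆ zshift (-(k₁ : ℤ)) F₂ ∧ F₂ ⊆ zshift (-(k₂ : ℤ)) F₁) := by
  constructor
  · -- simplicity → shift condition
    intro hsimp F₁ hF₁ F₂ hF₂
    have key : ∀ G ∈ 𝓕, ∀ H ∈ 𝓕, ∃ k : ℕ, G ⊆ zshift (-(k : ℤ)) H := by
      intro G hG H hH
      set J : Set (ℤ × ℤ × Set ℤ) :=
        {x | x.2.2 ∈ 𝓕 ∧ ∃ n : ℕ, x.2.2 ⊆ zshift (-(n : ℤ)) H} with hJdef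
      have hJsub : J ⊆ Scar 𝓕 := fun x hx => hx.1
      have hJne : J.Nonempty := by
        refine ⟨(0, 0, H), hH, 0, ?_⟩
        simp [zshift_zero]
      have hmem : ∀ z ∈ J, z.2.2 ∈ 𝓕 ∧ ∃ n : ℕ, z.2.2 ⊆ zshift (-(n : ℤ)) H :=
        fun z hz => hz
      have hclosed : ∀ x ∈ J, ∀ s ∈ Scar 𝓕, smul3 s x ∈ J ∧ smul3 x s ∈ J := by
        intro x hx s hs
        obtain ⟨hxF, n, hn⟩ := hx
        have hsF : s.2.2 ∈ 𝓕 := hs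
        constructor
        · obtain ⟨m, hm⟩ := smul3_third s x
          rcases hm with hm | hm
          · -- = s.2.2 ∩ zshift (-m) x.2.2
            refine ⟨by rw [hm]; exact h.2 m _ hsF _ hxF, n + m, ?_⟩
            rw [hm]
            intro z hz
            have : z ∈ zshift (-(m : ℤ)) x.2.2 := hz.2
            have h' := zshift_mono (-(m : ℤ)) hn this
            rw [zshift_zshift] at h'
            have he : -(m : ℤ) + -(n : ℤ) = -((n + m : ℕ) : ℤ) := by push_cast; ring
            rwa [he] at h'
          · -- = x.2.2 ∩ zshift (-m) s.2.2
            refine ⟨by rw [hm]; exact h.2 m _ hxF _ hsF, n, ?_⟩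
            rw [hm]
            exact fun z hz => hn hz.1
        · obtain ⟨m, hm⟩ := smul3_third x s
          rcases hm with hm | hm
          · refine ⟨by rw [hm]; exact h.2 m _ hxF _ hsF, n, ?_⟩
            rw [hm]
            exact fun z hz => hn hz.1
          · refine ⟨by rw [hm]; exact h.2 m _ hsF _ hxF, n + m, ?_⟩
            rw [hm]
            intro z hz
            have : z ∈ zshift (-(m : ℤ)) x.2.2 := hz.2
            have h' := zshift_mono (-(m : ℤ)) hn this
            rw [zshift_zshift] at h'
            have he : -(m : ℤ) + -(n : ℤ) = -((n + m : ℕ) : ℤ) := by push_cast; ring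
            rwa [he] at h'
      have hJeq := hsimp J hJne hJsub hclosed
      have hGmem : ((0 : ℤ), (0 : ℤ), G) ∈ J := by
        rw [hJeq]; exact hG
      exact hGmem.2
    obtain ⟨k₁, hk₁⟩ := key F₁ hF₁ F₂ hF₂
    obtain ⟨k₂, hk₂⟩ := key F₂ hF₂ F₁ hF₁
    exact ⟨k₁, k₂, hk₁, hk₂⟩
  · -- shift condition → simplicity
    intro hcond J hJne hJsub hJideal
    apply Set.Subset.antisymm hJsub
    obtain ⟨x, hx⟩ := hJne
    have hxF : x.2.2 ∈ 𝓕 := hJsub hx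
    intro y hy
    have hyF : y.2.2 ∈ 𝓕 := hy
    obtain ⟨k₁, -, h1, -⟩ := hcond y.2.2 hyF x.2.2 hxF
    -- h1 : y.2.2 ⊆ zshift (-(k₁:ℤ)) x.2.2
    set s₁ : ℤ × ℤ × Set ℤ := (y.1, x.1 + (k₁ : ℤ), y.2.2) with hs₁def
    have hs₁ : s₁ ∈ Scar 𝓕 := hyF
    have hstep1 : smul3 s₁ x = (y.1, x.2.1 + (k₁ : ℤ), y.2.2) := by
      unfold smul3
      rcases Nat.eq_zero_or_pos k₁ with hk | hk
      · subst hk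
        rw [if_neg (by simp [hs₁def]), if_pos (by simp [hs₁def])]
        have : y.2.2 ∩ x.2.2 = y.2.2 := by
          apply Set.inter_eq_left.mpr
          intro z hz
          have := h1 hz
          rwa [show -((0:ℕ):ℤ) = 0 by simp, zshift_zero] at this
        simp [hs₁def, this]
      · rw [if_neg (by simp [hs₁def]), if_neg (by simp [hs₁def]; omega)]
        have he : x.1 - s₁.2.1 = -(k₁ : ℤ) := by simp [hs₁def]
        have hint : y.2.2 ∩ zshift (x.1 - s₁.2.1) x.2.2 = y.2.2 := by
          rw [he]; exact Set.inter_eq_left.mpr h1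
        have h2 : s₁.2.1 - x.1 + x.2.1 = x.2.1 + (k₁ : ℤ) := by simp [hs₁def]; ring
        simp only [hs₁def] at hint h2 ⊢
        rw [hint, h2]
    have hy₁ : (y.1, x.2.1 + (k₁ : ℤ), y.2.2) ∈ J := by
      rw [← hstep1]; exact (hJideal x hx s₁ hs₁).1
    set s₂ : ℤ × ℤ × Set ℤ := (x.2.1 + (k₁ : ℤ), y.2.1, y.2.2) with hs₂def
    have hs₂ : s₂ ∈ Scar 𝓕 := hyF
    have hstep2 : smul3 (y.1, x.2.1 + (k₁ : ℤ), y.2.2) s₂ = y := by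
      unfold smul3
      rw [if_neg (by simp [hs₂def]), if_pos (by simp [hs₂def])]
      simp only [hs₂def, Set.inter_self]
    have := (hJideal _ hy₁ s₂ hs₂).2
    rwa [hstep2] at this
end

section
/- Let 𝓕 be an ω-closed family of subsets of ℕ with ∅ ∉ 𝓕. Then there exists a multiplication-preserving bijection from S(𝓕) onto the extended bicyclic semigroup B_ℤ if and only if 𝓕 = {F} for a single nonempty inductive subset F of ℕ (F is inductive if i ∈ F implies i + 1 ∈ F). -/
/-- The operation of the extended bicyclic semigroup `B_ℤ` on `ℤ × ℤ`. -/
def bmul (p q : ℤ × ℤ) : ℤ × ℤ :=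
  (p.1 + q.1 - min p.2 q.1, p.2 + q.2 - min p.2 q.1)

lemma smul3_scar {𝓕 : Set (Set ℤ)} (h : OmegaClosed 𝓕) {x y : ℤ × ℤ × Set ℤ}
    (hx : x ∈ Scar 𝓕) (hy : y ∈ Scar 𝓕) : smul3 x y ∈ Scar 𝓕 := by
  obtain ⟨-, hcl⟩ := h
  unfold Scar smul3
  simp only [Set.mem_setOf_eq]
  split_ifs with h1 h2
  · have := hcl (y.1 - x.2.1).toNat y.2.2 hy x.2.2 hx
    rw [Int.toNat_of_nonneg (by omega)] at this
    simpa [Set.inter_comm, show -(y.1 - x.2.1) = x.2.1 - y.1 by ring] using this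
  · have := hcl 0 x.2.2 hx y.2.2 hy
    simpa [zshift_zero] using this
  · have := hcl (x.2.1 - y.1).toNat x.2.2 hx y.2.2 hy
    rw [Int.toNat_of_nonneg (by omega)] at this
    simpa [show -(x.2.1 - y.1) = y.1 - x.2.1 by ring] using this

lemma key (F₁ F₂ : Set ℤ) (x y : ℤ × ℤ × Set ℤ)
    (h1 : smul3 (0,0,F₁) x = x) (h2 : smul3 x (0,0,F₂) = x)
    (h3 : smul3 x y = (0,0,F₁)) (h4 : smul3 y x = (0,0,F₂)) : F₁ ⊆ F₂ := by
  obtain ⟨p,q,G⟩ := x; obtain ⟨r,s,H⟩ := y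
  simp only [smul3] at h1 h2 h3 h4
  split_ifs at h1 h2 h3 h4 <;>
    simp only [Prod.mk.injEq] at h1 h2 h3 h4 <;>
    first
      | omega
      | (obtain ⟨-, -, hG⟩ := h2
         obtain ⟨-, -, hF⟩ := h3
         intro z hz
         rw [← hF] at hz
         have : z ∈ G := hz.1
         rw [← hG] at this
         exact this.2)

/-- when `∅ ∉ 𝓕`, `S(𝓕)` is isomorphic to the extended bicyclic
semigroup `B_ℤ` iff `𝓕 = {F}` for a single nonempty inductive subset `F` of `ℕ`. -/
theorem stmt14 (𝓕 : Set (Set ℤ)) (h : OmegaClosed 𝓕) (hempty : (∅ : Set ℤ) ∉ 𝓕) :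
    (∃ g : {x : ℤ × ℤ × Set ℤ // x ∈ Scar 𝓕} → ℤ × ℤ, Function.Bijective g ∧
      ∀ a b c : {x : ℤ × ℤ × Set ℤ // x ∈ Scar 𝓕},
        (c : ℤ × ℤ × Set ℤ) = smul3 a b → g c = bmul (g a) (g b)) ↔
    (∃ F : Set ℤ, 𝓕 = {F} ∧ F.Nonempty ∧ ∀ i ∈ F, i + 1 ∈ F) := by
  constructor
  · rintro ⟨g, ⟨ginj, gsurj⟩, hg⟩
    -- product of two carrier elements, as a subtype element
    have hmul : ∀ a b : {x : ℤ × ℤ × Set ℤ // x ∈ Scar 𝓕},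
        g ⟨smul3 a.val b.val, smul3_scar h a.2 b.2⟩ = bmul (g a) (g b) :=
      fun a b => hg a b ⟨smul3 a.val b.val, smul3_scar h a.2 b.2⟩ rfl
    -- every idempotent (k,k,F) maps to a diagonal element
    have diag : ∀ (F : Set ℤ) (hF : F ∈ 𝓕) (k : ℤ),
        ∃ d : ℤ, g ⟨(k,k,F), hF⟩ = (d, d) := by
      intro F hF k
      have he : smul3 (k,k,F) (k,k,F) = (k,k,F) := by simp [smul3]
      have hgg := hg ⟨(k,k,F), hF⟩ ⟨(k,k,F), hF⟩ ⟨(k,k,F), hF⟩ he.symm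
      rcases hge : g ⟨(k,k,F), hF⟩ with ⟨u, v⟩
      rw [hge] at hgg
      refine ⟨u, ?_⟩
      simp [bmul, Prod.ext_iff] at hgg ⊢
      omega
    -- every member of 𝓕 is inductive
    have hind : ∀ F ∈ 𝓕, ∀ i ∈ F, i + 1 ∈ F := by
      intro F hF
      set e : {x : ℤ × ℤ × Set ℤ // x ∈ Scar 𝓕} := ⟨(1,1,F), hF⟩ with he_def
      set f : {x : ℤ × ℤ × Set ℤ // x ∈ Scar 𝓕} := ⟨(0,0,F), hF⟩ with hf_def
      obtain ⟨a, ha⟩ := diag F hF 1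
      obtain ⟨b, hb⟩ := diag F hF 0
      have hmx := hmul e f
      rw [ha, hb] at hmx
      have hval : smul3 e.val f.val = (1, 1, F ∩ zshift (-1) F) := by
        simp [smul3, he_def, hf_def]
      have hne : a ≠ b := by
        intro hab
        have : e = f := ginj (by rw [ha, hb, hab])
        have := congrArg Subtype.val this
        simp [he_def, hf_def, Prod.ext_iff] at this
      have hcase : bmul (a,a) (b,b) = (max a b, max a b) := by
        simp [bmul]; omega
      rw [hcase] at hmx
      have hFeq : F ∩ zshift (-1) F = F := by
        rcases le_or_gt a b with hab | hab
        · -- max = b, so g c = g f, so c = f : contradiction with first coord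
          exfalso
          have hmax : max a b = b := by omega
          rw [hmax, ← hb] at hmx
          have := congrArg Subtype.val (ginj hmx)
          simp only [hval] at this
          simp [hf_def, Prod.ext_iff] at this
        · have hmax : max a b = a := by omega
          rw [hmax, ← ha] at hmx
          have := congrArg Subtype.val (ginj hmx)
          simp only [hval] at this
          simp only [he_def, Prod.mk.injEq] at this
          exact this.2.2
      intro i hi
      have : i ∈ zshift (-1) F := by rw [← hFeq] at hi; exact hi.2
      obtain ⟨k, hk, hik⟩ := this
      have : i + 1 = k := by omega
      rw [this]; exact hk
    -- 𝓕 is nonempty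
    obtain ⟨x0, hx0⟩ := gsurj (0, 0)
    have hF0 : x0.val.2.2 ∈ 𝓕 := x0.2
    -- any two members of 𝓕 are equal
    have hsub : ∀ F₁ ∈ 𝓕, ∀ F₂ ∈ 𝓕, F₁ ⊆ F₂ := by
      intro F₁ h₁ F₂ h₂
      set e : {x : ℤ × ℤ × Set ℤ // x ∈ Scar 𝓕} := ⟨(0,0,F₁), h₁⟩ with he_def
      set f : {x : ℤ × ℤ × Set ℤ // x ∈ Scar 𝓕} := ⟨(0,0,F₂), h₂⟩ with hf_def
      obtain ⟨a, ha⟩ := diag F₁ h₁ 0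
      obtain ⟨b, hb⟩ := diag F₂ h₂ 0
      obtain ⟨x, hx⟩ := gsurj (a, b)
      obtain ⟨y, hy⟩ := gsurj (b, a)
      have h1 : smul3 e.val x.val = x.val := by
        have := hmul e x
        rw [ha, hx] at this
        have hb1 : bmul (a,a) (a,b) = (a,b) := by simp [bmul]
        rw [hb1, ← hx] at this
        exact congrArg Subtype.val (ginj this)
      have h2 : smul3 x.val f.val = x.val := by
        have := hmul x f
        rw [hb, hx] at this
        have hb1 : bmul (a,b) (b,b) = (a,b) := by simp [bmul]
        rw [hb1, ← hx] at this
        exact congrArg Subtype.val (ginj this)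
      have h3 : smul3 x.val y.val = e.val := by
        have := hmul x y
        rw [hx, hy] at this
        have hb1 : bmul (a,b) (b,a) = (a,a) := by simp [bmul]
        rw [hb1, ← ha] at this
        exact congrArg Subtype.val (ginj this)
      have h4 : smul3 y.val x.val = f.val := by
        have := hmul y x
        rw [hx, hy] at this
        have hb1 : bmul (b,a) (a,b) = (b,b) := by simp [bmul]
        rw [hb1, ← hb] at this
        exact congrArg Subtype.val (ginj this)
      exact key F₁ F₂ x.val y.val h1 h2 h3 h4
    refine ⟨x0.val.2.2, ?_, ?_, hind _ hF0⟩
    · ext F'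
      simp only [Set.mem_singleton_iff]
      constructor
      · intro hF'
        exact Set.Subset.antisymm (hsub _ hF' _ hF0) (hsub _ hF0 _ hF')
      · rintro rfl; exact hF0
    · rw [Set.nonempty_iff_ne_empty]
      intro heq; rw [heq] at hF0; exact hempty hF0
  · rintro ⟨F, rfl, hne, hindF⟩
    refine ⟨fun a => (a.val.1, a.val.2.1), ⟨?_, ?_⟩, ?_⟩
    · rintro ⟨⟨i, j, A⟩, hA⟩ ⟨⟨i', j', B⟩, hB⟩ hab
      simp only [Scar, Set.mem_setOf_eq, Set.mem_singleton_iff] at hA hB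
      simp only [Prod.mk.injEq] at hab
      subst hA; subst hB
      simp_all
    · rintro ⟨i, j⟩
      exact ⟨⟨(i, j, F), rfl⟩, rfl⟩
    · rintro a b c hc
      dsimp only
      rw [hc]
      simp only [smul3, bmul]
      split_ifs <;> simp only [Prod.mk.injEq] <;> constructor <;> omega
end

section
/- Let 𝓕 be a nonempty ω-closed family of subsets of ℕ. Then the semigroup S(𝓕) is bisimple — i.e. any two elements x, y ∈ S(𝓕) are 𝒟-equivalent (there exists z ∈ S(𝓕) with {x} ∪ S(𝓕)·x = {z} ∪ S(𝓕)·z and {z} ∪ z·S(𝓕) = {y} ∪ y·S(𝓕)) — if and only if 𝓕 consists of exactly one set. -/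
/-- The principal right ideal of `x` in `S(𝓕)`: `{x} ∪ x·S(𝓕)`. -/
def rIdeal (𝓕 : Set (Set ℤ)) (x : ℤ × ℤ × Set ℤ) : Set (ℤ × ℤ × Set ℤ) :=
  {x} ∪ smul3 x '' Scar 𝓕

/-- The principal left ideal of `x` in `S(𝓕)`: `{x} ∪ S(𝓕)·x`. -/
def lIdeal (𝓕 : Set (Set ℤ)) (x : ℤ × ℤ × Set ℤ) : Set (ℤ × ℤ × Set ℤ) :=
  {x} ∪ (fun s => smul3 s x) '' Scar 𝓕

lemma smul3_fst_le (x s : ℤ × ℤ × Set ℤ) : x.1 ≤ (smul3 x s).1 := by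
  unfold smul3; split_ifs <;> dsimp <;> omega

lemma smul3_sub_of_fst_eq (x s : ℤ × ℤ × Set ℤ) (h : (smul3 x s).1 = x.1) :
    (smul3 x s).2.2 ⊆ x.2.2 := by
  unfold smul3 at *
  split_ifs at h ⊢ with h1 h2 <;> dsimp at h ⊢
  · omega
  · exact Set.inter_subset_left
  · exact Set.inter_subset_left

lemma smul3_snd_le (s x : ℤ × ℤ × Set ℤ) : x.2.1 ≤ (smul3 s x).2.1 := by
  unfold smul3; split_ifs <;> dsimp <;> omega

lemma smul3_sub_of_snd_eq (s x : ℤ × ℤ × Set ℤ) (h : (smul3 s x).2.1 = x.2.1) :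
    (smul3 s x).2.2 ⊆ x.2.2 := by
  unfold smul3 at *
  split_ifs at h ⊢ with h1 h2 <;> dsimp at h ⊢
  · exact Set.inter_subset_right
  · exact Set.inter_subset_right
  · omega

lemma smul3_right_shift (x y s : ℤ × ℤ × Set ℤ) (h1 : x.1 = y.1) (h2 : x.2.2 = y.2.2) :
    smul3 y (s.1 + y.2.1 - x.2.1, s.2.1, s.2.2) = smul3 x s := by
  unfold smul3
  rcases lt_trichotomy x.2.1 s.1 with h | h | h
  · rw [if_pos (show y.2.1 < (s.1 + y.2.1 - x.2.1, s.2.1, s.2.2).1 by dsimp; omega),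
      if_pos h]
    dsimp
    have e : y.2.1 - (s.1 + y.2.1 - x.2.1) = x.2.1 - s.1 := by ring
    have e0 : y.1 - y.2.1 + (s.1 + y.2.1 - x.2.1) = y.1 - x.2.1 + s.1 := by ring
    rw [e, h1, h2, e0]
  · rw [if_neg (show ¬ y.2.1 < (s.1 + y.2.1 - x.2.1, s.2.1, s.2.2).1 by dsimp; omega),
      if_pos (show y.2.1 = (s.1 + y.2.1 - x.2.1, s.2.1, s.2.2).1 by dsimp; omega),
      if_neg (show ¬ x.2.1 < s.1 by omega), if_pos h]
    dsimp
    rw [h1, h2]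
  · rw [if_neg (show ¬ y.2.1 < (s.1 + y.2.1 - x.2.1, s.2.1, s.2.2).1 by dsimp; omega),
      if_neg (show ¬ y.2.1 = (s.1 + y.2.1 - x.2.1, s.2.1, s.2.2).1 by dsimp; omega),
      if_neg (show ¬ x.2.1 < s.1 by omega), if_neg (show ¬ x.2.1 = s.1 by omega)]
    dsimp
    have e1 : y.2.1 - (s.1 + y.2.1 - x.2.1) + s.2.1 = x.2.1 - s.1 + s.2.1 := by ring
    have e2 : s.1 + y.2.1 - x.2.1 - y.2.1 = s.1 - x.2.1 := by ring
    rw [e1, e2, h1, h2]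

lemma smul3_left_shift (x y s : ℤ × ℤ × Set ℤ) (h1 : x.2.1 = y.2.1) (h2 : x.2.2 = y.2.2) :
    smul3 (s.1, s.2.1 + y.1 - x.1, s.2.2) y = smul3 s x := by
  unfold smul3
  rcases lt_trichotomy s.2.1 x.1 with h | h | h
  · rw [if_pos (show (s.1, s.2.1 + y.1 - x.1, s.2.2).2.1 < y.1 by dsimp; omega),
      if_pos h]
    dsimp
    have e1 : s.1 - (s.2.1 + y.1 - x.1) + y.1 = s.1 - s.2.1 + x.1 := by ring
    have e2 : s.2.1 + y.1 - x.1 - y.1 = s.2.1 - x.1 := by ring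
    rw [e1, e2, h1, h2]
  · rw [if_neg (show ¬ (s.1, s.2.1 + y.1 - x.1, s.2.2).2.1 < y.1 by dsimp; omega),
      if_pos (show (s.1, s.2.1 + y.1 - x.1, s.2.2).2.1 = y.1 by dsimp; omega),
      if_neg (show ¬ s.2.1 < x.1 by omega), if_pos h]
    dsimp
    rw [h1, h2]
  · rw [if_neg (show ¬ (s.1, s.2.1 + y.1 - x.1, s.2.2).2.1 < y.1 by dsimp; omega),
      if_neg (show ¬ (s.1, s.2.1 + y.1 - x.1, s.2.2).2.1 = y.1 by dsimp; omega),
      if_neg (show ¬ s.2.1 < x.1 by omega), if_neg (show ¬ s.2.1 = x.1 by omega)]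
    dsimp
    have e1 : s.2.1 + y.1 - x.1 - y.1 + y.2.1 = s.2.1 - x.1 + x.2.1 := by omega
    have e2 : y.1 - (s.2.1 + y.1 - x.1) = x.1 - s.2.1 := by ring
    rw [e1, e2, h1, h2]

lemma mem_rIdeal_imp {𝓕 : Set (Set ℤ)} {x w : ℤ × ℤ × Set ℤ} (hw : w ∈ rIdeal 𝓕 x) :
    x.1 ≤ w.1 ∧ (w.1 = x.1 → w.2.2 ⊆ x.2.2) := by
  rcases hw with hw | ⟨s, _, rfl⟩
  · rcases hw with rfl
    exact ⟨le_refl _, fun _ => subset_rfl⟩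
  · exact ⟨smul3_fst_le x s, smul3_sub_of_fst_eq x s⟩

lemma mem_lIdeal_imp {𝓕 : Set (Set ℤ)} {x w : ℤ × ℤ × Set ℤ} (hw : w ∈ lIdeal 𝓕 x) :
    x.2.1 ≤ w.2.1 ∧ (w.2.1 = x.2.1 → w.2.2 ⊆ x.2.2) := by
  rcases hw with hw | ⟨s, _, rfl⟩
  · rcases hw with rfl
    exact ⟨le_refl _, fun _ => subset_rfl⟩
  · exact ⟨smul3_snd_le s x, smul3_sub_of_snd_eq s x⟩

lemma rIdeal_eq_imp {𝓕 : Set (Set ℤ)} {x y : ℤ × ℤ × Set ℤ}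
    (h : rIdeal 𝓕 x = rIdeal 𝓕 y) : x.1 = y.1 ∧ x.2.2 = y.2.2 := by
  have hy : y ∈ rIdeal 𝓕 x := h ▸ Or.inl rfl
  have hx : x ∈ rIdeal 𝓕 y := h.symm ▸ Or.inl rfl
  have h1 := mem_rIdeal_imp hy
  have h2 := mem_rIdeal_imp hx
  have e : x.1 = y.1 := le_antisymm h1.1 h2.1
  exact ⟨e, Set.Subset.antisymm (h2.2 e) (h1.2 e.symm)⟩

lemma lIdeal_eq_imp {𝓕 : Set (Set ℤ)} {x y : ℤ × ℤ × Set ℤ}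
    (h : lIdeal 𝓕 x = lIdeal 𝓕 y) : x.2.1 = y.2.1 ∧ x.2.2 = y.2.2 := by
  have hy : y ∈ lIdeal 𝓕 x := h ▸ Or.inl rfl
  have hx : x ∈ lIdeal 𝓕 y := h.symm ▸ Or.inl rfl
  have h1 := mem_lIdeal_imp hy
  have h2 := mem_lIdeal_imp hx
  have e : x.2.1 = y.2.1 := le_antisymm h1.1 h2.1
  exact ⟨e, Set.Subset.antisymm (h2.2 e) (h1.2 e.symm)⟩

lemma rIdeal_subset {𝓕 : Set (Set ℤ)} {x y : ℤ × ℤ × Set ℤ} (hx : x ∈ Scar 𝓕)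
    (h1 : x.1 = y.1) (h2 : x.2.2 = y.2.2) : rIdeal 𝓕 x ⊆ rIdeal 𝓕 y := by
  rintro w (rfl | ⟨s, hs, rfl⟩)
  · refine Or.inr ⟨(y.2.1, w.2.1, w.2.2), hx, ?_⟩
    unfold smul3
    rw [if_neg (lt_irrefl _), if_pos rfl]
    dsimp
    rw [← h1, ← h2, Set.inter_self]
  · exact Or.inr ⟨(s.1 + y.2.1 - x.2.1, s.2.1, s.2.2), hs, smul3_right_shift x y s h1 h2⟩

lemma lIdeal_subset {𝓕 : Set (Set ℤ)} {x y : ℤ × ℤ × Set ℤ} (hx : x ∈ Scar 𝓕)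
    (h1 : x.2.1 = y.2.1) (h2 : x.2.2 = y.2.2) : lIdeal 𝓕 x ⊆ lIdeal 𝓕 y := by
  rintro w (rfl | ⟨s, hs, rfl⟩)
  · refine Or.inr ⟨(w.1, y.1, w.2.2), hx, ?_⟩
    show smul3 (w.1, y.1, w.2.2) y = w
    unfold smul3
    rw [if_neg (lt_irrefl _), if_pos rfl]
    dsimp
    rw [← h1, ← h2, Set.inter_self]
  · exact Or.inr ⟨(s.1, s.2.1 + y.1 - x.1, s.2.2), hs, smul3_left_shift x y s h1 h2⟩

lemma rIdeal_eq {𝓕 : Set (Set ℤ)} {x y : ℤ × ℤ × Set ℤ} (hx : x ∈ Scar 𝓕)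
    (h1 : x.1 = y.1) (h2 : x.2.2 = y.2.2) : rIdeal 𝓕 x = rIdeal 𝓕 y := by
  have hy : y ∈ Scar 𝓕 := by show y.2.2 ∈ 𝓕; rw [← h2]; exact hx
  exact Set.Subset.antisymm (rIdeal_subset hx h1 h2) (rIdeal_subset hy h1.symm h2.symm)

lemma lIdeal_eq {𝓕 : Set (Set ℤ)} {x y : ℤ × ℤ × Set ℤ} (hx : x ∈ Scar 𝓕)
    (h1 : x.2.1 = y.2.1) (h2 : x.2.2 = y.2.2) : lIdeal 𝓕 x = lIdeal 𝓕 y := by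
  have hy : y ∈ Scar 𝓕 := by show y.2.2 ∈ 𝓕; rw [← h2]; exact hx
  exact Set.Subset.antisymm (lIdeal_subset hx h1 h2) (lIdeal_subset hy h1.symm h2.symm)

/-- `S(𝓕)` is bisimple (any two elements are `𝒟`-equivalent) iff `𝓕`
consists of exactly one set. -/
theorem stmt15 (𝓕 : Set (Set ℤ)) (h : OmegaClosed 𝓕) (hne : 𝓕.Nonempty) :
    (∀ x ∈ Scar 𝓕, ∀ y ∈ Scar 𝓕, ∃ z ∈ Scar 𝓕,
      lIdeal 𝓕 x = lIdeal 𝓕 z ∧ rIdeal 𝓕 z = rIdeal 𝓕 y) ↔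
    (∃ F : Set ℤ, 𝓕 = {F}) := by
  constructor
  · intro hb
    obtain ⟨F₀, hF₀⟩ := hne
    refine ⟨F₀, Set.eq_singleton_iff_unique_mem.mpr ⟨hF₀, fun G hG => ?_⟩⟩
    obtain ⟨z, _, hl, hr⟩ := hb (0, 0, G) hG (0, 0, F₀) hF₀
    have e1 : G = z.2.2 := (lIdeal_eq_imp hl).2
    have e2 : z.2.2 = F₀ := (rIdeal_eq_imp hr).2
    exact e1.trans e2
  · rintro ⟨F, rfl⟩ x hx y hy
    have hx' : x.2.2 = F := hx
    have hy' : y.2.2 = F := hy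
    refine ⟨(y.1, x.2.1, F), rfl, ?_, ?_⟩
    · exact lIdeal_eq hx rfl hx'
    · exact rIdeal_eq rfl rfl hy'.symm
end

section
/- Let 𝓕₁ = {A ⊆ ℕ : A has at most one element}. Then 𝓕₁ is ω-closed, and the map f : S(𝓕₁) → B defined by f(i, j, {k}) = (i + k, k, j + k) for i, j ∈ ℤ, k ∈ ℕ, and f(i, j, ∅) = O (where B is the Brandt ℤ-extension of the semilattice (ℕ, min) and O its zero) satisfies: f(x·y) = f(x)·f(y) for all x, y ∈ S(𝓕₁); f is surjective; and f(x) = f(y) holds exactly when x = y or the third components of both x and y equal ∅. Consequently the Rees quotient of S(𝓕₁) by the ideal of ∅-triples is isomorphic to B. -/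
/-- The family `𝓕₁` of all subsets of `ℕ` (viewed inside `ℤ`) with at most one element. -/
def Fam1 : Set (Set ℤ) := {A : Set ℤ | (∀ x ∈ A, 0 ≤ x) ∧ A.Subsingleton}

/-- The Brandt `ℤ`-extension of the semilattice `(ℕ, min)`: `(a,s,b)·(c,t,d) =
(a, min s t, d)` if `b = c` and the zero `O` (represented by `none`) otherwise. -/
def brandtMul : Option (ℤ × ℕ × ℤ) → Option (ℤ × ℕ × ℤ) → Option (ℤ × ℕ × ℤ)
  | some (a, s, b), some (c, t, d) => if b = c then some (a, min s t, d) else none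
  | _, _ => none

open scoped Classical in
noncomputable def myf : ℤ × ℤ × Set ℤ → Option (ℤ × ℕ × ℤ) := fun x =>
  if h : ∃ k : ℕ, x.2.2 = {(k : ℤ)} then
    some (x.1 + h.choose, h.choose, x.2.1 + h.choose) else none

lemma fsingle (i j : ℤ) (k : ℕ) : myf (i, j, ({(k : ℤ)} : Set ℤ)) = some (i + k, k, j + k) := by
  have h : ∃ k' : ℕ, ({(k : ℤ)} : Set ℤ) = {(k' : ℤ)} := ⟨k, rfl⟩
  have hk : h.choose = k := by
    have hs := h.choose_spec
    have : ((k : ℤ)) = (h.choose : ℤ) := Set.singleton_eq_singleton_iff.mp hs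
    exact_mod_cast this.symm
  unfold myf
  rw [dif_pos h, hk]

lemma fempty (i j : ℤ) : myf (i, j, (∅ : Set ℤ)) = none := by
  unfold myf
  rw [dif_neg]
  rintro ⟨k, hk⟩
  exact (Set.singleton_ne_empty ((k:ℤ))) hk.symm

lemma zshift_empty (n : ℤ) : zshift n ∅ = ∅ := by
  ext x; simp [zshift]

lemma zshift_singleton (n a : ℤ) : zshift n {a} = {n + a} := by
  ext x; simp [zshift]

lemma sing_inter (c d : ℤ) : ({c} ∩ {d} : Set ℤ) = if c = d then {c} else ∅ := by
  split_ifs with h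
  · subst h; simp
  · ext x; simp; rintro rfl; exact h

lemma fam1_cases {F : Set ℤ} (h : F ∈ Fam1) : F = ∅ ∨ ∃ k : ℕ, F = {(k : ℤ)} := by
  rcases Set.eq_empty_or_nonempty F with h0 | ⟨a, ha⟩
  · exact Or.inl h0
  · right
    obtain ⟨hnn, hsub⟩ := h
    lift a to ℕ using hnn a ha with k
    exact ⟨k, Set.eq_singleton_iff_unique_mem.mpr ⟨ha, fun x hx => hsub hx ha⟩⟩

lemma mul_key : ∀ x ∈ Scar Fam1, ∀ y ∈ Scar Fam1,
    myf (smul3 x y) = brandtMul (myf x) (myf y) := by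
  rintro ⟨i₁, j₁, F₁⟩ hx ⟨i₂, j₂, F₂⟩ hy
  rcases fam1_cases hx with rfl | ⟨a, rfl⟩ <;> rcases fam1_cases hy with rfl | ⟨b, rfl⟩ <;>
    unfold smul3 <;> dsimp only <;> split_ifs with h h' <;>
    simp only [zshift_empty, zshift_singleton, Set.empty_inter, Set.inter_empty,
      fempty, fsingle, brandtMul] <;> try rfl
  -- remaining: singleton-singleton cases (x = (i₁,j₁,{↑a}), y = (i₂,j₂,{↑b}))
  · -- j₁ < i₂
    rw [sing_inter]
    split_ifs with hc hb hb
    · rw [show j₁ - i₂ + (a:ℤ) = ((b:ℕ):ℤ) from hc, fsingle]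
      simp only [Option.some.injEq, Prod.mk.injEq]
      exact ⟨by omega, by omega, trivial⟩
    · exfalso; omega
    · exfalso; omega
    · exact fempty _ _
  · -- j₁ = i₂
    rw [sing_inter]
    split_ifs with hc hb hb
    · rw [fsingle]
      simp only [Option.some.injEq, Prod.mk.injEq]
      exact ⟨trivial, by omega, by omega⟩
    · exfalso; omega
    · exfalso; omega
    · exact fempty _ _
  · -- j₁ > i₂
    rw [sing_inter]
    split_ifs with hc hb hb
    · rw [fsingle]
      simp only [Option.some.injEq, Prod.mk.injEq]
      exact ⟨trivial, by omega, by omega⟩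
    · exfalso; omega
    · exfalso; omega
    · exact fempty _ _

lemma surj_key : ∀ z : Option (ℤ × ℕ × ℤ), ∃ x ∈ Scar Fam1, myf x = z := by
  intro z
  match z with
  | none =>
    refine ⟨(0, 0, ∅), ?_, fempty 0 0⟩
    exact ⟨fun x hx => absurd hx (Set.notMem_empty x), Set.subsingleton_empty⟩
  | some (a, s, b) =>
    refine ⟨(a - s, b - s, {(s : ℤ)}), ?_, ?_⟩
    · exact ⟨fun x hx => by simp at hx; omega, Set.subsingleton_singleton⟩
    · rw [fsingle]
      simp only [Option.some.injEq, Prod.mk.injEq]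
      exact ⟨by omega, trivial, by omega⟩

lemma inj_key : ∀ x ∈ Scar Fam1, ∀ y ∈ Scar Fam1,
    (myf x = myf y ↔ x = y ∨ (x.2.2 = (∅ : Set ℤ) ∧ y.2.2 = (∅ : Set ℤ))) := by
  rintro ⟨i₁, j₁, F₁⟩ hx ⟨i₂, j₂, F₂⟩ hy
  rcases fam1_cases hx with rfl | ⟨a, rfl⟩ <;> rcases fam1_cases hy with rfl | ⟨b, rfl⟩
  · simp [fempty]
  · constructor
    · intro hf; rw [fempty, fsingle] at hf; exact absurd hf (by simp)
    · rintro (h | ⟨-, h⟩)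
      · rw [Prod.ext_iff, Prod.ext_iff] at h
        exact absurd h.2.2.symm (Set.singleton_ne_empty _)
      · exact absurd h (Set.singleton_ne_empty _)
  · constructor
    · intro hf; rw [fempty, fsingle] at hf; exact absurd hf.symm (by simp)
    · rintro (h | ⟨h, -⟩)
      · rw [Prod.ext_iff, Prod.ext_iff] at h
        exact absurd h.2.2 (Set.singleton_ne_empty _)
      · exact absurd h (Set.singleton_ne_empty _)
  · rw [fsingle, fsingle]
    constructor
    · intro hf
      simp only [Option.some.injEq, Prod.mk.injEq] at hf
      obtain ⟨h1, h2, h3⟩ := hf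
      subst h2
      left
      have e1 : i₁ = i₂ := by omega
      have e2 : j₁ = j₂ := by omega
      rw [e1, e2]
    · rintro (h | ⟨h, -⟩)
      · rw [Prod.ext_iff, Prod.ext_iff] at h
        obtain ⟨h1, h2, h3⟩ := h
        dsimp only at h1 h2 h3
        have hab : a = b := by
          have := Set.singleton_eq_singleton_iff.mp h3
          exact_mod_cast this
        rw [h1, h2, hab]
      · exact absurd h (Set.singleton_ne_empty _)

/-- `𝓕₁` is `ω`-closed and the map `f(i,j,{k}) = (i+k, k, j+k)`,
`f(i,j,∅) = O` is multiplicative and surjective onto the Brandt `ℤ`-extension of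
`(ℕ, min)`, identifying exactly the `∅`-triples; hence the Rees quotient of `S(𝓕₁)`
by the ideal of `∅`-triples is isomorphic to that Brandt extension. -/
theorem stmt19 :
    OmegaClosed Fam1 ∧
    ∃ f : ℤ × ℤ × Set ℤ → Option (ℤ × ℕ × ℤ),
      (∀ i j : ℤ, ∀ k : ℕ, f (i, j, ({(k : ℤ)} : Set ℤ)) = some (i + k, k, j + k)) ∧
      (∀ i j : ℤ, f (i, j, (∅ : Set ℤ)) = none) ∧
      (∀ x ∈ Scar Fam1, ∀ y ∈ Scar Fam1, f (smul3 x y) = brandtMul (f x) (f y)) ∧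
      (∀ z : Option (ℤ × ℕ × ℤ), ∃ x ∈ Scar Fam1, f x = z) ∧
      (∀ x ∈ Scar Fam1, ∀ y ∈ Scar Fam1,
        (f x = f y ↔ x = y ∨ (x.2.2 = (∅ : Set ℤ) ∧ y.2.2 = (∅ : Set ℤ)))) := by
  refine ⟨⟨fun F hF => hF.1, fun n F₁ h₁ F₂ h₂ =>
    ⟨fun x hx => h₁.1 x hx.1, h₁.2.anti Set.inter_subset_left⟩⟩,
    myf, fsingle, fempty, mul_key, surj_key, inj_key⟩
end
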